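/- Let q be a prime with q ≡ 9 (mod 16) (so q splits in ℤ[√2]), and let 𝔮 be any prime ideal of ℤ[√2] lying above q. Then the image of 2 + √2 in the residue field ℤ[√2]/𝔮 (a field with q elements) is not a square. Equivalently, 𝔮 is inert in the quadratic extension ℚ(√(2+√2))/ℚ(√2). -/

import Mathlib

open NumberField

noncomputable section Aux7

lemma aux7_uniq {a b c d : ℚ} (h : (a:ℝ) + b * Real.sqrt 2 = c + d * Real.sqrt 2) :
    a = c ∧ b = d := by
  by_cases hbd : b = d
  · subst hbd
    refine ⟨by exact_mod_cast add_right_cancel h, rfl⟩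
  · exfalso
    have hbd' : (d:ℝ) - b ≠ 0 := by
      intro h0
      have h1 : (d:ℝ) = b := sub_eq_zero.mp h0
      exact hbd (by exact_mod_cast h1.symm)
    have : Real.sqrt 2 = ((a - c) / (d - b) : ℚ) := by
      push_cast
      field_simp
      nlinarith [h]
    exact irrational_sqrt_two ⟨_, this.symm⟩

lemma aux7_sq_ne_two (r : ℚ) : r ^ 2 ≠ 2 := by
  intro h
  have h2 : Real.sqrt 2 = |(r:ℝ)| := by
    rw [show (2:ℝ) = (r:ℝ)^2 by exact_mod_cast congrArg (Rat.cast : ℚ → ℝ) h.symm]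
    exact Real.sqrt_sq_eq_abs _
  exact irrational_sqrt_two ⟨|r|, by rw [h2]; push_cast; rfl⟩

/-- the subfield of reals of the form a + b√2 -/
def aux7F : Subfield ℝ where
  carrier := {y | ∃ a b : ℚ, y = a + b * Real.sqrt 2}
  zero_mem' := ⟨0, 0, by norm_num⟩
  one_mem' := ⟨1, 0, by norm_num⟩
  add_mem' := by
    rintro y z ⟨a, b, rfl⟩ ⟨c, d, rfl⟩
    exact ⟨a + c, b + d, by push_cast; ring⟩
  neg_mem' := by
    rintro y ⟨a, b, rfl⟩
    exact ⟨-a, -b, by push_cast; ring⟩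
  mul_mem' := by
    rintro y z ⟨a, b, rfl⟩ ⟨c, d, rfl⟩
    refine ⟨a * c + 2 * b * d, a * d + b * c, ?_⟩
    have h2 : Real.sqrt 2 * Real.sqrt 2 = 2 := Real.mul_self_sqrt (by norm_num)
    push_cast
    linear_combination (b:ℝ) * d * h2
  inv_mem' := by
    rintro y ⟨a, b, rfl⟩
    by_cases hy : (a:ℝ) + b * Real.sqrt 2 = 0
    · rw [hy]; exact ⟨0, 0, by norm_num⟩
    · have hden : a^2 - 2*b^2 ≠ 0 := by
        intro h0
        have hb : b ≠ 0 := by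
          rintro rfl
          push_cast at h0 hy
          norm_num at h0
          simp [h0] at hy
        exact aux7_sq_ne_two (a / b) (by field_simp; linarith [h0])
      refine ⟨a / (a^2 - 2*b^2), -b / (a^2 - 2*b^2), ?_⟩
      have h2 : Real.sqrt 2 * Real.sqrt 2 = 2 := Real.mul_self_sqrt (by norm_num)
      have hdenR : ((a:ℝ)^2 - 2*(b:ℝ)^2) ≠ 0 := by
        intro h
        exact hden (by exact_mod_cast h)
      have key : ((a:ℝ) - b*Real.sqrt 2) * ((a:ℝ) + b*Real.sqrt 2) = (a:ℝ)^2 - 2*(b:ℝ)^2 := by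
        linear_combination (-(b:ℝ)^2) * h2
      have hrw : ((a / (a^2 - 2*b^2) : ℚ) : ℝ) + ((-b / (a^2 - 2*b^2) : ℚ) : ℝ) * Real.sqrt 2
          = ((a:ℝ) - b*Real.sqrt 2) / ((a:ℝ)^2 - 2*(b:ℝ)^2) := by
        push_cast
        field_simp
        ring
      have hmul : (((a / (a^2 - 2*b^2) : ℚ) : ℝ) + ((-b / (a^2 - 2*b^2) : ℚ) : ℝ) * Real.sqrt 2)
          * ((a:ℝ) + (b:ℝ) * Real.sqrt 2) = 1 := by
        rw [hrw, div_mul_eq_mul_div, key, div_self hdenR]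
      exact (eq_inv_of_mul_eq_one_left hmul).symm

lemma aux7_memQ1 {Q1 : Subfield ℝ} (hQ1 : Q1 = Subfield.closure {Real.sqrt 2}) (x : ℝ) :
    x ∈ Q1 ↔ ∃ a b : ℚ, x = a + b * Real.sqrt 2 := by
  subst hQ1
  constructor
  · intro hx
    have hle : Subfield.closure {Real.sqrt 2} ≤ aux7F := by
      rw [Subfield.closure_le]
      rintro y hy
      rw [Set.mem_singleton_iff] at hy
      subst hy
      exact ⟨0, 1, by norm_num⟩
    exact hle hx
  · rintro ⟨a, b, rfl⟩
    have hs : Real.sqrt 2 ∈ Subfield.closure {Real.sqrt 2} :=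
      Subfield.subset_closure rfl
    have ha : (a:ℝ) ∈ Subfield.closure {Real.sqrt 2} :=
      SubfieldClass.ratCast_mem _ a
    have hb : (b:ℝ) ∈ Subfield.closure {Real.sqrt 2} :=
      SubfieldClass.ratCast_mem _ b
    exact add_mem ha (mul_mem hb hs)

noncomputable section Aux7b

local notation "θ" => Real.sqrt (2 + Real.sqrt 2)
local notation "sq2" => Real.sqrt 2

lemma aux7_sqrt2_nonneg : (0:ℝ) ≤ Real.sqrt 2 := Real.sqrt_nonneg 2

lemma aux7_theta_sq : θ ^ 2 = 2 + Real.sqrt 2 :=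
  Real.sq_sqrt (by positivity)

lemma aux7_theta_pos : 0 < θ :=
  Real.sqrt_pos.mpr (by positivity)

lemma aux7_two_mem (F : Subfield ℝ) : (2 : ℝ) ∈ F := by
  exact_mod_cast SubfieldClass.ratCast_mem F (2:ℚ)

section
variable {Q1 : Subfield ℝ} (hQ1 : Q1 = Subfield.closure {Real.sqrt 2})


lemma aux7_theta_ne (a b : ℚ) : θ ≠ (a:ℝ) + b * Real.sqrt 2 := by
  intro h
  have h2 : Real.sqrt 2 * Real.sqrt 2 = 2 := Real.mul_self_sqrt (by norm_num)
  have hθ : ((a:ℝ) + b * Real.sqrt 2)^2 = 2 + Real.sqrt 2 := by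
    rw [← h]; exact aux7_theta_sq
  have expand : ((a^2 + 2*b^2 : ℚ):ℝ) + ((2*a*b : ℚ):ℝ) * Real.sqrt 2
      = ((2:ℚ):ℝ) + ((1:ℚ):ℝ) * Real.sqrt 2 := by
    push_cast
    linear_combination hθ - (b:ℝ)^2 * h2
  obtain ⟨e1, e2⟩ := aux7_uniq expand
  exact aux7_sq_ne_two (2*a^2 - 2) (by linear_combination 4*a^2*e1 - 2*(2*a*b+1)*e2)

include hQ1 in
lemma aux7_theta_not_mem : θ ∉ Q1 := by
  intro h
  obtain ⟨a, b, hab⟩ := (aux7_memQ1 hQ1 θ).mp h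
  exact aux7_theta_ne a b hab

include hQ1 in
lemma aux7_theta_ne_mem {x : ℝ} (hx : x ∈ Q1) : θ ≠ x := by
  rintro rfl; exact aux7_theta_not_mem hQ1 hx

include hQ1 in
lemma aux7_uniqL {p q p' q' : ℝ} (hp : p ∈ Q1) (hq : q ∈ Q1) (hp' : p' ∈ Q1) (hq' : q' ∈ Q1)
    (h : p + q * θ = p' + q' * θ) : p = p' ∧ q = q' := by
  by_cases hqq : q = q'
  · subst hqq
    exact ⟨by linarith, rfl⟩
  · exfalso
    have hne : q' - q ≠ 0 := fun h0 => hqq (by linarith [sub_eq_zero.mp h0])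
    have : θ = (p - p') / (q' - q) := by
      field_simp
      linarith [h]
    exact aux7_theta_ne_mem hQ1 (div_mem (sub_mem hp hp') (sub_mem hq' hq)) this

include hQ1 in
lemma aux7_sqrt2_mem : Real.sqrt 2 ∈ Q1 := by
  rw [hQ1]; exact Subfield.subset_closure rfl

include hQ1 in
lemma aux7_tau_mem : (2 : ℝ) + Real.sqrt 2 ∈ Q1 :=
  add_mem (aux7_two_mem Q1) (aux7_sqrt2_mem hQ1)

set_option maxHeartbeats 1000000 in
/-- the subfield of reals of the form p + q θ with p q ∈ Q1 -/
def aux7FL (hQ1 : Q1 = Subfield.closure {Real.sqrt 2}) : Subfield ℝ where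
  carrier := {y | ∃ p q : ℝ, p ∈ Q1 ∧ q ∈ Q1 ∧ y = p + q * θ}
  zero_mem' := ⟨0, 0, zero_mem _, zero_mem _, by norm_num⟩
  one_mem' := ⟨1, 0, one_mem _, zero_mem _, by norm_num⟩
  add_mem' := by
    rintro y z ⟨p, q, hp, hq, rfl⟩ ⟨p', q', hp', hq', rfl⟩
    exact ⟨p + p', q + q', add_mem hp hp', add_mem hq hq', by ring⟩
  neg_mem' := by
    rintro y ⟨p, q, hp, hq, rfl⟩
    exact ⟨-p, -q, neg_mem hp, neg_mem hq, by ring⟩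
  mul_mem' := by
    rintro y z ⟨p, q, hp, hq, rfl⟩ ⟨p', q', hp', hq', rfl⟩
    refine ⟨p * p' + q * q' * (2 + Real.sqrt 2), p * q' + q * p',
      add_mem (mul_mem hp hp') (mul_mem (mul_mem hq hq') (aux7_tau_mem hQ1)),
      add_mem (mul_mem hp hq') (mul_mem hq hp'), ?_⟩
    linear_combination q * q' * aux7_theta_sq
  inv_mem' := by
    rintro y ⟨p, q, hp, hq, rfl⟩
    by_cases hy : p + q * θ = 0
    · rw [hy]; exact ⟨0, 0, zero_mem _, zero_mem _, by norm_num⟩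
    · have hden : p^2 - q^2 * (2 + Real.sqrt 2) ≠ 0 := by
        intro h0
        by_cases hq0 : q = 0
        · rw [hq0] at h0
          have h0' : p ^ 2 = 0 := by linarith [h0]; 
          have hp0 : p = 0 := by
            exact pow_eq_zero_iff (by norm_num) |>.mp h0'
          exact hy (by rw [hp0, hq0]; ring)
        · have hpq : (p / q)^2 = θ^2 := by
            rw [aux7_theta_sq]
            field_simp
            linarith [h0]
          have hfac : (p / q - θ) * (p / q + θ) = 0 := by linear_combination hpq
          rcases mul_eq_zero.mp hfac with h1 | h1
          · exact aux7_theta_ne_mem hQ1 (div_mem hp hq) (by linarith [h1])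
          · have hth : θ = (-p) / q := by rw [neg_div]; linarith [h1]
            exact aux7_theta_ne_mem hQ1 (div_mem (neg_mem hp) hq) hth
      refine ⟨p / (p^2 - q^2 * (2 + Real.sqrt 2)), -q / (p^2 - q^2 * (2 + Real.sqrt 2)),
        div_mem hp (sub_mem (pow_mem hp 2) (mul_mem (pow_mem hq 2) (aux7_tau_mem hQ1))),
        div_mem (neg_mem hq) (sub_mem (pow_mem hp 2) (mul_mem (pow_mem hq 2) (aux7_tau_mem hQ1))),
        ?_⟩
      have key : (p - q * θ) * (p + q * θ) = p^2 - q^2 * (2 + Real.sqrt 2) := by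
        linear_combination (-q^2) * aux7_theta_sq
      have hrw : p / (p^2 - q^2 * (2 + Real.sqrt 2)) + -q / (p^2 - q^2 * (2 + Real.sqrt 2)) * θ
          = (p - q * θ) / (p^2 - q^2 * (2 + Real.sqrt 2)) := by ring
      have hmul : (p / (p^2 - q^2 * (2 + Real.sqrt 2)) +
          -q / (p^2 - q^2 * (2 + Real.sqrt 2)) * θ) * (p + q * θ) = 1 := by
        rw [hrw, div_mul_eq_mul_div, key, div_self hden]
      exact (eq_inv_of_mul_eq_one_left hmul).symm

lemma aux7_memL {L : Subfield ℝ} (hL : L = Subfield.closure {θ})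
    (hQ1 : Q1 = Subfield.closure {Real.sqrt 2}) (x : ℝ) :
    x ∈ L ↔ ∃ p q : ℝ, p ∈ Q1 ∧ q ∈ Q1 ∧ x = p + q * θ := by
  subst hL
  constructor
  · intro hx
    have hle : Subfield.closure {θ} ≤ aux7FL hQ1 := by
      rw [Subfield.closure_le]
      rintro y hy
      rw [Set.mem_singleton_iff] at hy
      subst hy
      exact ⟨0, 1, zero_mem _, one_mem _, by norm_num⟩
    exact hle hx
  · rintro ⟨p, q, hp, hq, rfl⟩
    have hθL : θ ∈ Subfield.closure {θ} := Subfield.subset_closure rfl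
    have hQ1L : Q1 ≤ Subfield.closure {θ} := by
      rw [hQ1, Subfield.closure_le]
      rintro y hy
      rw [Set.mem_singleton_iff] at hy
      subst hy
      have heq : Real.sqrt 2 = θ * θ - 2 := by
        have h := aux7_theta_sq
        nlinarith [h]
      have hmem : θ * θ - 2 ∈ Subfield.closure {θ} :=
        sub_mem (mul_mem hθL hθL) (aux7_two_mem (Subfield.closure {θ}))
      rwa [← heq] at hmem
    exact add_mem (hQ1L hp) (mul_mem (hQ1L hq) hθL)

end
end Aux7b

noncomputable section Aux7c

local notation "θ" => Real.sqrt (2 + Real.sqrt 2)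

variable {Q1 : Subfield ℝ} (hQ1 : Q1 = Subfield.closure {Real.sqrt 2})

/-- first rational coordinate of an element of Q1 -/
noncomputable def aux7a (x : Q1) : ℚ := ((aux7_memQ1 hQ1 (x:ℝ)).mp x.2).choose

noncomputable def aux7b (x : Q1) : ℚ :=
  (((aux7_memQ1 hQ1 (x:ℝ)).mp x.2).choose_spec).choose

lemma aux7ab_spec (x : Q1) :
    (x:ℝ) = aux7a hQ1 x + aux7b hQ1 x * Real.sqrt 2 :=
  (((aux7_memQ1 hQ1 (x:ℝ)).mp x.2).choose_spec).choose_spec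

lemma aux7ab_eq (x : Q1) {a b : ℚ} (h : (x:ℝ) = a + b * Real.sqrt 2) :
    aux7a hQ1 x = a ∧ aux7b hQ1 x = b :=
  aux7_uniq ((aux7ab_spec hQ1 x).symm.trans h)

lemma aux7_sqrt2_mul : Real.sqrt 2 * Real.sqrt 2 = 2 := Real.mul_self_sqrt (by norm_num)

/-- conjugation on Q1, sending √2 to -√2 -/
noncomputable def aux7conj1 : Q1 →+* ℝ where
  toFun x := (aux7a hQ1 x : ℝ) - aux7b hQ1 x * Real.sqrt 2
  map_one' := by
    obtain ⟨h1, h2⟩ := aux7ab_eq hQ1 1 (a := 1) (b := 0) (by push_cast; norm_num)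
    rw [h1, h2]; push_cast; ring
  map_zero' := by
    obtain ⟨h1, h2⟩ := aux7ab_eq hQ1 0 (a := 0) (b := 0) (by push_cast; norm_num)
    rw [h1, h2]; push_cast; ring
  map_mul' x y := by
    have hx := aux7ab_spec hQ1 x
    have hy := aux7ab_spec hQ1 y
    have hxy : ((x * y : Q1) : ℝ) =
        ((aux7a hQ1 x * aux7a hQ1 y + 2 * aux7b hQ1 x * aux7b hQ1 y : ℚ) : ℝ) +
        ((aux7a hQ1 x * aux7b hQ1 y + aux7b hQ1 x * aux7a hQ1 y : ℚ) : ℝ) * Real.sqrt 2 := by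
      push_cast
      rw [hx, hy]
      linear_combination ((aux7b hQ1 x : ℝ) * (aux7b hQ1 y : ℝ)) * aux7_sqrt2_mul
    obtain ⟨h1, h2⟩ := aux7ab_eq hQ1 (x * y) hxy
    rw [h1, h2]
    push_cast
    linear_combination (-(aux7b hQ1 x : ℝ) * (aux7b hQ1 y : ℝ)) * aux7_sqrt2_mul
  map_add' x y := by
    have hx := aux7ab_spec hQ1 x
    have hy := aux7ab_spec hQ1 y
    have hxy : ((x + y : Q1) : ℝ) =
        ((aux7a hQ1 x + aux7a hQ1 y : ℚ) : ℝ) +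
        ((aux7b hQ1 x + aux7b hQ1 y : ℚ) : ℝ) * Real.sqrt 2 := by
      push_cast
      rw [hx, hy]
      ring
    obtain ⟨h1, h2⟩ := aux7ab_eq hQ1 (x + y) hxy
    rw [h1, h2]
    push_cast
    ring

lemma aux7conj1_spec (x : Q1) {a b : ℚ} (h : (x:ℝ) = a + b * Real.sqrt 2) :
    aux7conj1 hQ1 x = a - b * Real.sqrt 2 := by
  obtain ⟨h1, h2⟩ := aux7ab_eq hQ1 x h
  show (aux7a hQ1 x : ℝ) - aux7b hQ1 x * Real.sqrt 2 = _
  rw [h1, h2]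

end Aux7c

noncomputable section Aux7d

local notation "θ" => Real.sqrt (2 + Real.sqrt 2)

variable {Q1 L : Subfield ℝ} (hQ1 : Q1 = Subfield.closure {Real.sqrt 2})
  (hL : L = Subfield.closure {θ})

noncomputable def aux7p (x : L) : ℝ := ((aux7_memL hL hQ1 (x:ℝ)).mp x.2).choose

noncomputable def aux7q (x : L) : ℝ :=
  (((aux7_memL hL hQ1 (x:ℝ)).mp x.2).choose_spec).choose

lemma aux7pq_spec (x : L) :
    aux7p hQ1 hL x ∈ Q1 ∧ aux7q hQ1 hL x ∈ Q1 ∧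
      (x:ℝ) = aux7p hQ1 hL x + aux7q hQ1 hL x * θ :=
  (((aux7_memL hL hQ1 (x:ℝ)).mp x.2).choose_spec).choose_spec

lemma aux7pq_eq (x : L) {p q : ℝ} (hp : p ∈ Q1) (hq : q ∈ Q1)
    (h : (x:ℝ) = p + q * θ) :
    aux7p hQ1 hL x = p ∧ aux7q hQ1 hL x = q := by
  obtain ⟨h1, h2, h3⟩ := aux7pq_spec hQ1 hL x
  exact aux7_uniqL hQ1 h1 h2 hp hq (h3.symm.trans h)

/-- conjugation on L over Q1, sending θ to -θ -/
noncomputable def aux7conjL : L →+* ℝ where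
  toFun x := aux7p hQ1 hL x - aux7q hQ1 hL x * θ
  map_one' := by
    obtain ⟨h1, h2⟩ := aux7pq_eq hQ1 hL 1 (p := 1) (q := 0) (one_mem _) (zero_mem _)
      (by push_cast; ring)
    rw [h1, h2]; ring
  map_zero' := by
    obtain ⟨h1, h2⟩ := aux7pq_eq hQ1 hL 0 (p := 0) (q := 0) (zero_mem _) (zero_mem _)
      (by push_cast; ring)
    rw [h1, h2]; ring
  map_mul' x y := by
    obtain ⟨hpx, hqx, hx⟩ := aux7pq_spec hQ1 hL x
    obtain ⟨hpy, hqy, hy⟩ := aux7pq_spec hQ1 hL y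
    have hxy : ((x * y : L) : ℝ) =
        (aux7p hQ1 hL x * aux7p hQ1 hL y
          + aux7q hQ1 hL x * aux7q hQ1 hL y * (2 + Real.sqrt 2))
        + (aux7p hQ1 hL x * aux7q hQ1 hL y + aux7q hQ1 hL x * aux7p hQ1 hL y) * θ := by
      push_cast
      rw [hx, hy]
      linear_combination (aux7q hQ1 hL x * aux7q hQ1 hL y) * aux7_theta_sq
    obtain ⟨h1, h2⟩ := aux7pq_eq hQ1 hL (x * y)
      (add_mem (mul_mem hpx hpy) (mul_mem (mul_mem hqx hqy) (aux7_tau_mem hQ1)))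
      (add_mem (mul_mem hpx hqy) (mul_mem hqx hpy)) hxy
    rw [h1, h2]
    linear_combination (-(aux7q hQ1 hL x) * aux7q hQ1 hL y) * aux7_theta_sq
  map_add' x y := by
    obtain ⟨hpx, hqx, hx⟩ := aux7pq_spec hQ1 hL x
    obtain ⟨hpy, hqy, hy⟩ := aux7pq_spec hQ1 hL y
    have hxy : ((x + y : L) : ℝ) =
        (aux7p hQ1 hL x + aux7p hQ1 hL y) + (aux7q hQ1 hL x + aux7q hQ1 hL y) * θ := by
      push_cast
      rw [hx, hy]
      ring
    obtain ⟨h1, h2⟩ := aux7pq_eq hQ1 hL (x + y) (add_mem hpx hpy) (add_mem hqx hqy) hxy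
    rw [h1, h2]
    ring

lemma aux7conjL_spec (x : L) {p q : ℝ} (hp : p ∈ Q1) (hq : q ∈ Q1)
    (h : (x:ℝ) = p + q * θ) : aux7conjL hQ1 hL x = p - q * θ := by
  obtain ⟨h1, h2⟩ := aux7pq_eq hQ1 hL x hp hq h
  show aux7p hQ1 hL x - aux7q hQ1 hL x * θ = _
  rw [h1, h2]

end Aux7d

noncomputable section Aux7e

open Polynomial

local notation "θ" => Real.sqrt (2 + Real.sqrt 2)

variable {Q1 L : Subfield ℝ} (hQ1 : Q1 = Subfield.closure {Real.sqrt 2})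
  (hL : L = Subfield.closure {θ})

lemma aux7_rat_int {x : ℚ} (h : IsIntegral ℤ (x:ℝ)) : ∃ m : ℤ, (m:ℚ) = x := by
  have h1 : IsIntegral ℤ x := by
    rw [← isIntegral_algebraMap_iff (algebraMap ℚ ℝ).injective, eq_ratCast (algebraMap ℚ ℝ)]
    exact h
  obtain ⟨m, hm⟩ := IsIntegrallyClosed.isIntegral_iff.mp h1
  exact ⟨m, by rw [← hm]; simp⟩

lemma aux7_sq_int {j : ℤ} {x : ℚ} (hx : x^2 = 2*j) : IsIntegral ℤ x := by
  refine ⟨X^2 - C (2*j), monic_X_pow_sub_C _ (by norm_num), ?_⟩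
  simp only [eval₂_sub, eval₂_pow, eval₂_X, eval₂_C]
  rw [show ((algebraMap ℤ ℚ) (2*j) : ℚ) = 2*(j:ℚ) by simp, hx]
  ring

include hQ1 in
lemma aux7_twocoords (x : 𝓞 Q1) : ∃ m n : ℤ,
    2 * (((x : Q1)) : ℝ) = m + n * Real.sqrt 2 := by
  set X : Q1 := (x : Q1) with hXdef
  have hX : IsIntegral ℤ X := x.isIntegral_coe
  set a := aux7a hQ1 X
  set b := aux7b hQ1 X
  have spec : (X:ℝ) = a + b * Real.sqrt 2 := aux7ab_spec hQ1 X
  have hconj : aux7conj1 hQ1 X = a - b * Real.sqrt 2 := aux7conj1_spec hQ1 X spec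
  have hint1 : IsIntegral ℤ ((X : ℝ)) := IsIntegral.map (Subfield.subtype Q1).toIntAlgHom hX
  have hint2 : IsIntegral ℤ (aux7conj1 hQ1 X) := IsIntegral.map (aux7conj1 hQ1).toIntAlgHom hX
  have e1 : ((2*a : ℚ):ℝ) = (X:ℝ) + aux7conj1 hQ1 X := by
    rw [spec, hconj]; push_cast; ring
  obtain ⟨m, hm⟩ := aux7_rat_int (x := 2*a) (by rw [e1]; exact hint1.add hint2)
  have e2 : ((a^2 - 2*b^2 : ℚ):ℝ) = (X:ℝ) * aux7conj1 hQ1 X := by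
    rw [spec, hconj]; push_cast
    linear_combination ((b:ℝ)^2) * aux7_sqrt2_mul
  obtain ⟨k, hk⟩ := aux7_rat_int (x := a^2 - 2*b^2) (by rw [e2]; exact hint1.mul hint2)
  set j : ℤ := m^2 - 4*k with hjdef
  have hj : (4*b : ℚ)^2 = 2*(j:ℚ) := by
    have hjq : (j:ℚ) = (m:ℚ)^2 - 4*(k:ℚ) := by rw [hjdef]; push_cast; ring
    rw [hjq]
    linear_combination (-2*((m:ℚ) + 2*a))*hm + 8*hk
  obtain ⟨g, hg⟩ := aux7_rat_int (x := 4*b)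
    (by
      have := aux7_sq_int hj
      rw [← isIntegral_algebraMap_iff (algebraMap ℚ ℝ).injective] at this
      rw [eq_ratCast (algebraMap ℚ ℝ)] at this
      exact this)
  have hg2 : g^2 = 2*j := by
    have : ((g:ℚ))^2 = 2*(j:ℚ) := by rw [hg]; exact hj
    exact_mod_cast this
  have heven : (2:ℤ) ∣ g := Int.Prime.dvd_pow' Nat.prime_two ⟨j, hg2⟩
  obtain ⟨n, rfl⟩ := heven
  have hn : (n:ℚ) = 2*b := by
    have : ((2*n : ℤ):ℚ) = 4*b := hg
    push_cast at this
    linarith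
  refine ⟨m, n, ?_⟩
  have hmR : (m:ℝ) = 2*(a:ℝ) := by exact_mod_cast congrArg (Rat.cast : ℚ → ℝ) hm
  have hnR : (n:ℝ) = 2*(b:ℝ) := by exact_mod_cast congrArg (Rat.cast : ℚ → ℝ) hn
  rw [spec]
  linear_combination -hmR - Real.sqrt 2 * hnR

include hQ1 hL in
lemma aux7_Lcoords (x u : 𝓞 L) (hu : ((u : L) : ℝ) = θ) :
    ∃ (y z : 𝓞 Q1) (p q : ℝ), p ∈ Q1 ∧ q ∈ Q1 ∧ ((x : L) : ℝ) = p + q * θ ∧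
      ((y : Q1) : ℝ) = 2 * p ∧ ((z : Q1) : ℝ) = 2 * (q * (2 + Real.sqrt 2)) := by
  have hX : IsIntegral ℤ ((x : L)) := x.isIntegral_coe
  obtain ⟨hpm, hqm, spec⟩ := aux7pq_spec hQ1 hL (x : L)
  set p := aux7p hQ1 hL (x : L) with hpdef
  set q := aux7q hQ1 hL (x : L) with hqdef
  have hconj : aux7conjL hQ1 hL (x : L) = p - q * θ := aux7conjL_spec hQ1 hL _ hpm hqm spec
  have hint1 : IsIntegral ℤ (((x : L) : ℝ)) := IsIntegral.map (Subfield.subtype L).toIntAlgHom hX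
  have hint2 : IsIntegral ℤ (aux7conjL hQ1 hL (x : L)) :=
    IsIntegral.map (aux7conjL hQ1 hL).toIntAlgHom hX
  -- the element x*u
  have hXU : IsIntegral ℤ ((x*u : 𝓞 L) : L) := (x*u).isIntegral_coe
  have hXUval : (((x*u : 𝓞 L) : L) : ℝ) = q * (2 + Real.sqrt 2) + p * θ := by
    push_cast
    rw [hu, spec]
    linear_combination q * aux7_theta_sq
  have hconj2 : aux7conjL hQ1 hL ((x*u : 𝓞 L) : L) = q * (2 + Real.sqrt 2) - p * θ :=
    aux7conjL_spec hQ1 hL _ (mul_mem hqm (aux7_tau_mem hQ1)) hpm hXUval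
  have hint3 : IsIntegral ℤ ((((x*u : 𝓞 L) : L)) : ℝ) :=
    IsIntegral.map (Subfield.subtype L).toIntAlgHom hXU
  have hint4 : IsIntegral ℤ (aux7conjL hQ1 hL ((x*u : 𝓞 L) : L)) :=
    IsIntegral.map (aux7conjL hQ1 hL).toIntAlgHom hXU
  -- 2p and 2qτ are integral elements of Q1
  have h2p : IsIntegral ℤ ((2*p : ℝ)) := by
    have e : (2*p : ℝ) = ((x : L):ℝ) + aux7conjL hQ1 hL (x : L) := by rw [spec, hconj]; ring
    rw [e]; exact hint1.add hint2
  have h2q : IsIntegral ℤ ((2*(q*(2+Real.sqrt 2)) : ℝ)) := by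
    have e : (2*(q*(2+Real.sqrt 2)) : ℝ) =
        (((x*u : 𝓞 L) : L) : ℝ) + aux7conjL hQ1 hL ((x*u : 𝓞 L) : L) := by
      rw [hXUval, hconj2]; ring
    rw [e]; exact hint3.add hint4
  have hymem : (2*p : ℝ) ∈ Q1 := mul_mem (aux7_two_mem Q1) hpm
  have hzmem : (2*(q*(2+Real.sqrt 2)) : ℝ) ∈ Q1 :=
    mul_mem (aux7_two_mem Q1) (mul_mem hqm (aux7_tau_mem hQ1))
  have hyint : IsIntegral ℤ (⟨2*p, hymem⟩ : Q1) := by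
    rw [← isIntegral_algebraMap_iff (algebraMap Q1 ℝ).injective]
    exact h2p
  have hzint : IsIntegral ℤ (⟨2*(q*(2+Real.sqrt 2)), hzmem⟩ : Q1) := by
    rw [← isIntegral_algebraMap_iff (algebraMap Q1 ℝ).injective]
    exact h2q
  exact ⟨⟨_, hyint⟩, ⟨_, hzint⟩, p, q, hpm, hqm, spec, rfl, rfl⟩

end Aux7e


lemma aux7_zmod (q : ℕ) [Fact q.Prime] (hq16 : q % 16 = 9) (u z : ZMod q)
    (hu : u^2 = 2) : z^2 ≠ 2 + u := by
  intro hz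
  have hqp : q.Prime := Fact.out
  have hq2 : q ≠ 2 := by omega
  have two_ne : (2 : ZMod q) ≠ 0 := by
    intro h
    have h2 : ((2:ℕ) : ZMod q) = 0 := by exact_mod_cast h
    have := (ZMod.natCast_eq_zero_iff 2 q).mp h2
    have := Nat.le_of_dvd (by norm_num) this
    omega
  have hm1 : IsSquare (-1 : ZMod q) := ZMod.exists_sq_eq_neg_one_iff.mpr (by omega)
  have h2sq : IsSquare (2 : ZMod q) := (ZMod.exists_sq_eq_two_iff hq2).mpr (by omega)
  have hm2 : IsSquare (-2 : ZMod q) := by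
    have := hm1.mul h2sq
    rwa [neg_one_mul] at this
  obtain ⟨r, hr⟩ := hm2
  have hr2 : r^2 = -2 := by rw [hr]; ring
  set i2 : ZMod q := (2:ZMod q)⁻¹ with hi2def
  have hi2 : (2:ZMod q) * i2 = 1 := mul_inv_cancel₀ two_ne
  set ζ : ZMod q := (u + r) * i2 with hζdef
  have h2' : (u + r)^2 = 2*(u*r) := by linear_combination hu + hr2
  have h4 : (u + r)^4 = -16 := by
    linear_combination ((u+r)^2 + 2*(u*r))*h2' + 4*r^2*hu + 8*hr2
  have hζ4 : ζ^4 = -1 := by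
    rw [hζdef]
    have e : ((u+r)*i2)^4 = (u+r)^4 * i2^4 := by ring
    rw [e, h4]
    linear_combination (-(i2^3) * 8 - 4*i2^2 - 2*i2 - 1) * hi2
  have hkey : ζ * (2 + u) = (1 + ζ)^2 := by
    rw [hζdef]
    linear_combination (i2 - i2^2) * hu + (-(i2^2)) * hr2 + (1 - u*r*i2) * hi2
  have h2u : (2+u)*(2-u) = 2 := by linear_combination -hu
  have hz0 : z ≠ 0 := by
    intro h0
    rw [h0] at hz
    rw [← hz] at h2u
    simp at h2u
    exact two_ne (by rw [← h2u])
  have h1ζ : (1:ZMod q) + ζ ≠ 0 := by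
    intro h0
    have hζm1 : ζ = -1 := by linear_combination h0
    rw [hζm1] at hζ4
    norm_num at hζ4
    exact two_ne (by linear_combination hζ4)
  set w : ZMod q := (1 + ζ) * z⁻¹ with hwdef
  have hzinv : z⁻¹ * z = 1 := inv_mul_cancel₀ hz0
  have hw2 : w^2 = ζ := by
    have e : w^2 * z^2 = ζ * z^2 := by
      have e1 : w^2 * z^2 = (1+ζ)^2 * (z⁻¹*z)^2 := by rw [hwdef]; ring
      rw [hzinv, one_pow, mul_one] at e1
      rw [e1, ← hkey, hz]
    exact mul_right_cancel₀ (pow_ne_zero 2 hz0) e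
  have hw8 : w^8 = -1 := by
    rw [show w^8 = (w^2)^4 by ring, hw2, hζ4]
  have hw16 : w^16 = 1 := by
    rw [show w^16 = (w^8)^2 by ring, hw8]
    norm_num
  have hw0 : w ≠ 0 := by
    intro h0
    rw [h0] at hw8
    norm_num at hw8
  set W : (ZMod q)ˣ := Units.mk0 w hw0 with hWdef
  have hW16 : W^16 = 1 := by
    ext
    rw [Units.val_pow_eq_pow_val]
    simpa [hWdef] using hw16
  have horder : orderOf W ∣ 16 := orderOf_dvd_of_pow_eq_one hW16
  have hnot8 : ¬ (orderOf W ∣ 8) := by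
    intro hdvd
    have hW8 : W^8 = 1 := orderOf_dvd_iff_pow_eq_one.mp hdvd
    have : w^8 = 1 := by
      have := congrArg (Units.val) hW8
      rw [Units.val_pow_eq_pow_val] at this
      simpa [hWdef] using this
    rw [hw8] at this
    exact two_ne (by linear_combination -this)
  have h16 : orderOf W = 16 := by
    obtain ⟨i, hi, he⟩ := (Nat.dvd_prime_pow Nat.prime_two).mp
      (show orderOf W ∣ 2^4 by norm_num at horder ⊢; exact horder)
    interval_cases i
    · exact absurd (he ▸ (by norm_num : (2:ℕ)^0 ∣ 8)) hnot8
    · exact absurd (he ▸ (by norm_num : (2:ℕ)^1 ∣ 8)) hnot8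
    · exact absurd (he ▸ (by norm_num : (2:ℕ)^2 ∣ 8)) hnot8
    · exact absurd (he ▸ (by norm_num : (2:ℕ)^3 ∣ 8)) hnot8
    · rw [he]; norm_num
  have hdvd : orderOf W ∣ Fintype.card (ZMod q)ˣ := orderOf_dvd_card
  rw [h16, ZMod.card_units_eq_totient, Nat.totient_prime hqp] at hdvd
  have hq2' : 2 ≤ q := hqp.two_le
  omega

noncomputable section Aux7Main

open Polynomial

local notation "θ" => Real.sqrt (2 + Real.sqrt 2)

set_option maxHeartbeats 2000000 in
set_option synthInstance.maxHeartbeats 1000000 in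
/-- Let `q ≡ 9 (mod 16)` be a prime and let `𝔮` be any prime ideal of
`ℤ[√2]` (the ring of integers of `ℚ(√2)`) lying above `q`.  Then the image of `2 + √2`
in the residue field `ℤ[√2]/𝔮` is not a square; equivalently, `𝔮` is inert in
`ℚ(√(2+√2))/ℚ(√2)`, i.e. its extension to the ring of integers of `ℚ(√(2+√2))`
is prime. -/
theorem stmt_7 (q : ℕ) [Fact q.Prime] (hq16 : q % 16 = 9)
    (Q1 L : Subfield ℝ)
    (hQ1 : Q1 = Subfield.closure {Real.sqrt 2})
    (hL : L = Subfield.closure {Real.sqrt (2 + Real.sqrt 2)})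
    [NumberField Q1] [NumberField L]
    (𝔮 : Ideal (𝓞 Q1)) (h𝔮 : 𝔮.IsPrime) (hq𝔮 : (q : 𝓞 Q1) ∈ 𝔮)
    (t : 𝓞 Q1) (ht : ((t : Q1) : ℝ) = 2 + Real.sqrt 2) :
    (¬ ∃ y : 𝓞 Q1 ⧸ 𝔮, y ^ 2 = Ideal.Quotient.mk 𝔮 t) ∧
    (∀ f : 𝓞 Q1 →+* 𝓞 L, (∀ x : 𝓞 Q1, ((f x : L) : ℝ) = ((x : Q1) : ℝ)) →
      (Ideal.map f 𝔮).IsPrime) := by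
  have hqp : q.Prime := Fact.out
  -- the real-valuation ring homs
  set vQ : 𝓞 Q1 →+* ℝ := (Subfield.subtype Q1).comp (algebraMap (𝓞 Q1) Q1) with hvQdef
  have hvQ : ∀ x : 𝓞 Q1, vQ x = ((x : Q1) : ℝ) := fun _ => rfl
  have hvQinj : Function.Injective vQ :=
    Subtype.val_injective.comp NumberField.RingOfIntegers.coe_injective
  -- the element s = √2
  set s : 𝓞 Q1 := t - 2 with hsdef
  have hs : vQ s = Real.sqrt 2 := by
    rw [hsdef, map_sub, hvQ t, ht]
    have : vQ 2 = 2 := by rw [map_ofNat]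
    rw [this]; ring
  have hs2 : s ^ 2 = 2 := by
    apply hvQinj
    rw [map_pow, hs, map_ofNat]
    rw [sq]
    exact aux7_sqrt2_mul
  have hts : t = 2 + s := by rw [hsdef]; ring
  have htprod : t * (4 - t) = 2 := by
    apply hvQinj
    rw [map_mul, map_sub, map_ofNat, map_ofNat, hvQ t, ht]
    linear_combination -aux7_sqrt2_mul
  -- basic ideal facts
  have hbot : 𝔮 ≠ ⊥ := by
    intro h0
    rw [h0, Ideal.mem_bot] at hq𝔮
    have : (q : 𝓞 Q1) ≠ 0 := Nat.cast_ne_zero.mpr hqp.ne_zero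
    exact this hq𝔮
  have hmax : 𝔮.IsMaximal := Ideal.IsPrime.isMaximal h𝔮 hbot
  have h2notin : (2 : 𝓞 Q1) ∉ 𝔮 := by
    intro h2
    obtain ⟨k, hk⟩ : ∃ k, q = 2 * k + 1 := ⟨q / 2, by omega⟩
    have h1 : (1 : 𝓞 Q1) ∈ 𝔮 := by
      have : ((1 : ℕ) : 𝓞 Q1) = (q : 𝓞 Q1) - 2 * (k : 𝓞 Q1) := by
        rw [hk]; push_cast; ring
      rw [Nat.cast_one] at this
      rw [this]
      exact sub_mem hq𝔮 (Ideal.mul_mem_right _ _ h2)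
    exact h𝔮.ne_top (Ideal.eq_top_iff_one 𝔮 |>.mpr h1)
  have htnotin : t ∉ 𝔮 := by
    intro hmem
    exact h2notin (htprod ▸ Ideal.mul_mem_right _ _ hmem)
  -- the residue field and ZMod q
  haveI hnt : Nontrivial (𝓞 Q1 ⧸ 𝔮) := Ideal.Quotient.nontrivial_iff.mpr h𝔮.ne_top
  haveI : CharP (𝓞 Q1 ⧸ 𝔮) q := by
    refine (CharP.charP_iff_prime_eq_zero hqp).mpr ?_
    have : ((q : 𝓞 Q1) : 𝓞 Q1 ⧸ 𝔮) = 0 := Ideal.Quotient.eq_zero_iff_mem.mpr hq𝔮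
    rw [← this]
    push_cast
    rfl
  set ψ : ZMod q →+* 𝓞 Q1 ⧸ 𝔮 := ZMod.castHom (dvd_refl q) (𝓞 Q1 ⧸ 𝔮) with hψdef
  have hψinj : Function.Injective ψ := ψ.injective
  haveI : IsDomain (𝓞 Q1 ⧸ 𝔮) := Ideal.Quotient.isDomain 𝔮
  have two_ne : (2 : ZMod q) ≠ 0 := by
    intro h
    have h2 : ((2:ℕ) : ZMod q) = 0 := by exact_mod_cast h
    have := (ZMod.natCast_eq_zero_iff 2 q).mp h2
    have := Nat.le_of_dvd (by norm_num) this
    omega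
  -- square root of 2 mod q
  obtain ⟨c, hc⟩ : IsSquare (2 : ZMod q) :=
    (ZMod.exists_sq_eq_two_iff (by omega)).mpr (by omega)
  have hc2 : c ^ 2 = 2 := by rw [hc]; ring
  set Cz : ℤ := (c.val : ℤ) with hCdef
  have hCc : ((Cz : ℤ) : ZMod q) = c := by
    rw [hCdef]
    push_cast
    simp [ZMod.natCast_val, ZMod.cast_id]
  have hqdvd : (q:ℤ) ∣ 2 - Cz^2 := by
    rw [← ZMod.intCast_zmod_eq_zero_iff_dvd]
    push_cast
    rw [hCc, hc2]
    ring
  -- image of s in the residue field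
  have hfactor : (s - ((Cz : ℤ) : 𝓞 Q1)) * (s + ((Cz : ℤ) : 𝓞 Q1)) ∈ 𝔮 := by
    obtain ⟨d, hd⟩ := hqdvd
    have he : (s - ((Cz : ℤ) : 𝓞 Q1)) * (s + ((Cz : ℤ) : 𝓞 Q1)) = ((2 - Cz^2 : ℤ) : 𝓞 Q1) := by
      push_cast
      linear_combination hs2
    rw [he, hd]
    push_cast
    exact Ideal.mul_mem_right _ _ (by exact_mod_cast hq𝔮)
  have hd : ∃ d : ZMod q, d ^ 2 = 2 ∧ Ideal.Quotient.mk 𝔮 s = ψ d := by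
    rcases h𝔮.mem_or_mem hfactor with hm | hm
    · refine ⟨c, hc2, ?_⟩
      have h0 : Ideal.Quotient.mk 𝔮 (s - ((Cz : ℤ) : 𝓞 Q1)) = 0 := Ideal.Quotient.eq_zero_iff_mem.mpr hm
      rw [map_sub] at h0
      have h1 : Ideal.Quotient.mk 𝔮 s = Ideal.Quotient.mk 𝔮 ((Cz : ℤ) : 𝓞 Q1) := by
        linear_combination h0
      rw [h1]
      rw [map_intCast, ← hCc, map_intCast]
    · refine ⟨-c, by rw [neg_pow]; rw [hc2]; norm_num, ?_⟩
      have h0 : Ideal.Quotient.mk 𝔮 (s + ((Cz : ℤ) : 𝓞 Q1)) = 0 := Ideal.Quotient.eq_zero_iff_mem.mpr hm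
      rw [map_add] at h0
      have h1 : Ideal.Quotient.mk 𝔮 s = -Ideal.Quotient.mk 𝔮 ((Cz : ℤ) : 𝓞 Q1) := by
        linear_combination h0
      rw [h1, map_intCast, ← hCc, map_neg, map_intCast]
  obtain ⟨d, hd2, hds⟩ := hd
  -- surjectivity of ψ
  have hψ2 : ψ 2 = Ideal.Quotient.mk 𝔮 2 := by
    rw [map_ofNat, map_ofNat]
  have hψ2ne : ψ 2 ≠ 0 := fun h0 => two_ne (hψinj (by rw [h0, map_zero]))
  have hsurj : Function.Surjective ψ := by
    intro ξ
    obtain ⟨x, rfl⟩ := Ideal.Quotient.mk_surjective ξ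
    obtain ⟨m, n, hmn⟩ := aux7_twocoords hQ1 x
    have h2x : (2 : 𝓞 Q1) * x = (m : 𝓞 Q1) + (n : 𝓞 Q1) * s := by
      apply hvQinj
      rw [map_add, map_mul, map_mul, hs, map_ofNat, map_intCast, map_intCast]
      rw [hvQ x] at *
      exact hmn
    refine ⟨(2 : ZMod q)⁻¹ * (m + n * d), ?_⟩
    have hi2 : (2 : ZMod q) * (2 : ZMod q)⁻¹ = 1 := mul_inv_cancel₀ two_ne
    apply mul_left_cancel₀ hψ2ne
    have lhs : ψ 2 * ψ ((2 : ZMod q)⁻¹ * (m + n * d)) = ψ (m + n*d) := by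
      rw [← map_mul, ← mul_assoc, hi2, one_mul]
    rw [lhs, hψ2]
    have : Ideal.Quotient.mk 𝔮 2 * Ideal.Quotient.mk 𝔮 x = Ideal.Quotient.mk 𝔮 (2 * x) := by
      rw [map_mul]
    rw [this, h2x]
    have e1 : ψ ((m:ZMod q) + (n:ZMod q) * d) = (m : 𝓞 Q1 ⧸ 𝔮) + (n : 𝓞 Q1 ⧸ 𝔮) * ψ d := by
      rw [map_add, map_mul, map_intCast, map_intCast]
    have e2 : Ideal.Quotient.mk 𝔮 ((m : 𝓞 Q1) + (n : 𝓞 Q1) * s)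
        = (m : 𝓞 Q1 ⧸ 𝔮) + (n : 𝓞 Q1 ⧸ 𝔮) * Ideal.Quotient.mk 𝔮 s := by
      rw [map_add, map_mul, map_intCast, map_intCast]
    rw [e2, hds, e1]
  -- PART 1
  have hpart1 : ¬ ∃ y : 𝓞 Q1 ⧸ 𝔮, y ^ 2 = Ideal.Quotient.mk 𝔮 t := by
    rintro ⟨y, hy⟩
    obtain ⟨z, rfl⟩ := hsurj y
    have htq : Ideal.Quotient.mk 𝔮 t = ψ (2 + d) := by
      rw [hts, map_add, map_ofNat, map_add, map_ofNat, hds]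
    rw [htq, ← map_pow] at hy
    have hz2 : z ^ 2 = 2 + d := hψinj hy
    exact aux7_zmod q hq16 d z hd2 hz2
  refine ⟨hpart1, ?_⟩
  -- PART 2
  intro f hf
  letI : Algebra (𝓞 Q1) (𝓞 L) := f.toAlgebra
  have halg : algebraMap (𝓞 Q1) (𝓞 L) = f := rfl
  set vL : 𝓞 L →+* ℝ := (Subfield.subtype L).comp (algebraMap (𝓞 L) L) with hvLdef
  have hvL : ∀ x : 𝓞 L, vL x = ((x : L) : ℝ) := fun _ => rfl
  have hvLinj : Function.Injective vL :=
    Subtype.val_injective.comp NumberField.RingOfIntegers.coe_injective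
  have hfinj : Function.Injective f := by
    intro x y hxy
    apply hvQinj
    rw [hvQ, hvQ, ← hf x, ← hf y, ← hvL, ← hvL, hxy]
  letI : IsScalarTower ℤ (𝓞 Q1) (𝓞 L) := IsScalarTower.of_algebraMap_eq' (RingHom.ext_int _ _)
  letI : Module.IsTorsionFree (𝓞 Q1) (𝓞 L) := Module.isTorsionFree_iff_algebraMap_injective.mpr hfinj
  -- θ as an element of 𝓞 L
  have hθmem : θ ∈ L := by rw [hL]; exact Subfield.subset_closure rfl
  have hθR : IsIntegral ℤ (θ : ℝ) := by
    refine ⟨X^4 - 4*X^2 + C 2, by monicity!, ?_⟩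
    simp only [eval₂_add, eval₂_sub, eval₂_mul, eval₂_pow, eval₂_X, eval₂_C, eval₂_ofNat]
    rw [show ((algebraMap ℤ ℝ) 2 : ℝ) = 2 by simp]
    linear_combination (θ^2 + 2 + Real.sqrt 2 - 4) * aux7_theta_sq + aux7_sqrt2_mul
  have hθint : IsIntegral ℤ ((⟨θ, hθmem⟩ : L)) := by
    rw [← isIntegral_algebraMap_iff (algebraMap L ℝ).injective]
    exact hθR
  set u : 𝓞 L := ⟨⟨θ, hθmem⟩, hθint⟩ with hudef
  have hu : ((u : L) : ℝ) = θ := rfl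
  have huf : u ^ 2 = f t := by
    apply hvLinj
    rw [map_pow, hvL, hvL, hu, hf t, ht]
    exact aux7_theta_sq
  have huint : IsIntegral (𝓞 Q1) u := by
    refine IsIntegral.tower_top (R := ℤ) ?_
    rw [← isIntegral_algebraMap_iff (A := 𝓞 L) (B := L) NumberField.RingOfIntegers.coe_injective]
    exact hθint
  -- the minimal polynomial of u over 𝓞 Q1 is X² - t
  have hPmonic : (X^2 - C t).Monic := monic_X_pow_sub_C t (by norm_num)
  have hPaeval : aeval u (X^2 - C t) = 0 := by
    rw [map_sub, map_pow, aeval_X, aeval_C, halg, huf]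
    ring
  have hminpoly : minpoly (𝓞 Q1) u = X^2 - C t := by
    have hdvd := minpoly.isIntegrallyClosed_dvd huint hPaeval
    obtain ⟨g, hg⟩ := hdvd
    have hmp := minpoly.monic huint
    have hgne : g ≠ 0 := by
      intro h0
      rw [h0, mul_zero] at hg
      exact hPmonic.ne_zero hg
    have hdeg : (minpoly (𝓞 Q1) u).natDegree + g.natDegree = 2 := by
      have := congrArg natDegree hg
      rw [natDegree_mul hmp.ne_zero hgne] at this
      rw [← this]
      have : (X^2 - C t).natDegree = 2 := by
        compute_degree!
      rw [this]
    have hdpos : 0 < (minpoly (𝓞 Q1) u).natDegree := minpoly.natDegree_pos huint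
    have hdne1 : (minpoly (𝓞 Q1) u).natDegree ≠ 1 := by
      intro h1
      have heq := hmp.eq_X_add_C h1
      have := minpoly.aeval (𝓞 Q1) u
      rw [heq, map_add, aeval_X, aeval_C, halg] at this
      have hueq : u = f (-(minpoly (𝓞 Q1) u).coeff 0) := by
        rw [map_neg]
        linear_combination this
      have hmem : ((f (-(minpoly (𝓞 Q1) u).coeff 0) : L) : ℝ) ∈ Q1 := by
        rw [hf]
        exact Subtype.coe_prop _
      obtain ⟨a, b, hab⟩ := (aux7_memQ1 hQ1 _).mp hmem
      refine aux7_theta_ne a b ?_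
      calc θ = ((u : L) : ℝ) := hu.symm
        _ = ((f (-(minpoly (𝓞 Q1) u).coeff 0) : L) : ℝ) :=
          congrArg (fun w : 𝓞 L => ((w : L) : ℝ)) hueq
        _ = (a:ℝ) + b * Real.sqrt 2 := hab
    have hd2' : (minpoly (𝓞 Q1) u).natDegree = 2 := by omega
    have hgdeg : g.natDegree = 0 := by omega
    have hglc : g.leadingCoeff = 1 := by
      have := congrArg leadingCoeff hg
      rw [leadingCoeff_mul, hmp.leadingCoeff, one_mul, hPmonic.leadingCoeff] at this
      exact this.symm
    have hg1 : g = 1 := by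
      have hgc := Polynomial.eq_C_of_natDegree_eq_zero hgdeg
      rw [Polynomial.leadingCoeff, hgdeg] at hglc
      rw [hgc, hglc, map_one]
    rw [hg, hg1, mul_one]
  -- the conductor condition
  have hval : ∀ r : 𝓞 Q1, vL (algebraMap (𝓞 Q1) (𝓞 L) r) = vQ r := fun r => by
    rw [halg, hvL, hvQ, hf]
  have hcond_elt : (4 * t : 𝓞 Q1) ∈ (conductor (𝓞 Q1) u).comap (algebraMap (𝓞 Q1) (𝓞 L)) := by
    rw [Ideal.mem_comap, mem_conductor_iff]
    intro b
    obtain ⟨y, z, p, q', hpm, hqm, hbval, hyval, hzval⟩ := aux7_Lcoords hQ1 hL b u hu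
    have hkey : algebraMap (𝓞 Q1) (𝓞 L) (4*t) * b
        = algebraMap (𝓞 Q1) (𝓞 L) (2*t*y) + algebraMap (𝓞 Q1) (𝓞 L) (2*z) * u := by
      apply hvLinj
      simp only [map_mul, map_add, hval, map_ofNat]
      rw [hvL b, hvL u, hu, hbval, hvQ t, ht, hvQ y, hyval, hvQ z, hzval]
      ring
    rw [hkey]
    exact add_mem (Subalgebra.algebraMap_mem _ _)
      (mul_mem (Subalgebra.algebraMap_mem _ _) (Algebra.subset_adjoin rfl))
  have h4tnotin : (4*t : 𝓞 Q1) ∉ 𝔮 := by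
    intro hmem
    rcases h𝔮.mem_or_mem hmem with h4 | htq
    · have h4' : ((2:𝓞 Q1)*2) ∈ 𝔮 := by
        rw [show ((2:𝓞 Q1)*2) = 4 by norm_num]
        exact h4
      rcases h𝔮.mem_or_mem h4' with h' | h' <;> exact h2notin h'
    · exact htnotin htq
  have hsup : (conductor (𝓞 Q1) u).comap (algebraMap (𝓞 Q1) (𝓞 L)) ⊔ 𝔮 = ⊤ := by
    by_contra hne
    have heq := hmax.eq_of_le hne le_sup_right
    refine h4tnotin ?_
    rw [heq]
    exact (le_sup_left : (conductor (𝓞 Q1) u).comap (algebraMap (𝓞 Q1) (𝓞 L)) ≤ _) hcond_elt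
  -- irreducibility of the minimal polynomial mod 𝔮
  letI : Field (𝓞 Q1 ⧸ 𝔮) := Ideal.Quotient.field 𝔮
  have hmapeq : (minpoly (𝓞 Q1) u).map (Ideal.Quotient.mk 𝔮)
      = X^2 - C (Ideal.Quotient.mk 𝔮 t) := by
    rw [hminpoly, Polynomial.map_sub, Polynomial.map_pow, map_X, map_C]
  have hirr : Irreducible ((minpoly (𝓞 Q1) u).map (Ideal.Quotient.mk 𝔮)) := by
    rw [hmapeq]
    exact X_pow_sub_C_irreducible_of_prime Nat.prime_two (fun b hb => hpart1 ⟨b, hb⟩)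
  have hKD := KummerDedekind.Ideal.irreducible_map_of_irreducible_minpoly hmax hbot hsup huint hirr
  rw [halg] at hKD
  exact Ideal.isPrime_of_prime (UniqueFactorizationMonoid.irreducible_iff_prime.mp hKD)

end Aux7Main
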